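/- Let K ≥ 1 be a real number, let G be a group, let A be a K-approximate subgroup of G, and let H be a subgroup of G. Then for every integer k ≥ 1 one has |A^k ∩ H| ≤ K^(k-1) · |A² ∩ H|. -/

import Mathlib

open scoped Pointwise

/-- A finite subset `A` of a group `G` is a `K`-approximate subgroup if it is
symmetric, contains the identity, and there is a symmetric subset `X ⊆ A·A·A`
with `|X| ≤ K` such that `A·A ⊆ X·A`. -/
def IsApproxSubgroup {G : Type*} [Group G] (K : ℝ) (A : Set G) : Prop :=
  A.Finite ∧ (1 : G) ∈ A ∧ (∀ a ∈ A, a⁻¹ ∈ A) ∧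
    ∃ X : Set G, X.Finite ∧ X ⊆ A * A * A ∧ (∀ x ∈ X, x⁻¹ ∈ X) ∧
      (X.ncard : ℝ) ≤ K ∧ A * A ⊆ X * A

private lemma biUnion_ncard_le' {α : Type*} {Y : Set α} (hY : Y.Finite) (s : α → Set α)
    (m : ℕ) (hcard : ∀ y ∈ Y, (s y).ncard ≤ m) (hfin : ∀ y ∈ Y, (s y).Finite) :
    (⋃ y ∈ Y, s y).ncard ≤ Y.ncard * m := by
  refine Set.Finite.induction_on (motive := fun Y _ => (∀ y ∈ Y, (s y).ncard ≤ m) →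
      (∀ y ∈ Y, (s y).Finite) → (⋃ y ∈ Y, s y).ncard ≤ Y.ncard * m)
    Y hY (by simp) ?_ hcard hfin
  intro a Y ha hYf ih hcard hfin
  rw [Set.biUnion_insert]
  have h1 : (s a ∪ ⋃ y ∈ Y, s y).ncard ≤ (s a).ncard + (⋃ y ∈ Y, s y).ncard :=
    Set.ncard_union_le _ _
  have h2 := ih (fun y hy => hcard y (Set.mem_insert_of_mem a hy))
    (fun y hy => hfin y (Set.mem_insert_of_mem a hy))
  have h3 := hcard a (Set.mem_insert a Y)
  rw [Set.ncard_insert_of_notMem ha hYf]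
  calc (s a ∪ ⋃ y ∈ Y, s y).ncard ≤ (s a).ncard + (⋃ y ∈ Y, s y).ncard := h1
    _ ≤ m + Y.ncard * m := Nat.add_le_add h3 h2
    _ = (Y.ncard + 1) * m := by ring

private lemma slice_ncard_le {G : Type*} [Group G] {A : Set G} (hfin : A.Finite)
    (hsym : ∀ a ∈ A, a⁻¹ ∈ A) (H : Subgroup G) (y : G) :
    ((y • A) ∩ (H : Set G)).ncard ≤ (A * A ∩ (H : Set G)).ncard := by
  rcases ((y • A) ∩ (H : Set G)).eq_empty_or_nonempty with he | ⟨h, hh⟩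
  · simp [he]
  obtain ⟨⟨a₀, ha₀, rfl⟩, hhH⟩ := hh
  have hsub : (y • A) ∩ (H : Set G) ⊆ (y * a₀) • (A * A ∩ (H : Set G)) := by
    rintro z ⟨⟨a, ha, rfl⟩, hzH⟩
    refine ⟨a₀⁻¹ * a, ⟨Set.mul_mem_mul (hsym a₀ ha₀) ha, ?_⟩, by simp [smul_eq_mul, mul_assoc]⟩
    have : (y * a₀)⁻¹ * (y * a) ∈ H := H.mul_mem (H.inv_mem hhH) hzH
    simpa [mul_assoc] using this
  calc ((y • A) ∩ (H : Set G)).ncard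
      ≤ ((y * a₀) • (A * A ∩ (H : Set G))).ncard :=
        Set.ncard_le_ncard hsub (((hfin.mul hfin).inter_of_left _).smul_set)
    _ = (A * A ∩ (H : Set G)).ncard := Set.ncard_smul_set _ _

/-- Lemma (basic)(ii), second part: `|A^k ∩ H| ≤ K^(k-1) |A² ∩ H|` for `k ≥ 1`. -/
theorem stmt_2 {G : Type*} [Group G] (K : ℝ) (hK : 1 ≤ K) (A : Set G)
    (hA : IsApproxSubgroup K A) (H : Subgroup G) :
    ∀ k : ℕ, 1 ≤ k →
      ((A ^ k ∩ (H : Set G)).ncard : ℝ) ≤ K ^ (k - 1) * (A * A ∩ (H : Set G)).ncard := by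
  obtain ⟨hAfin, h1A, hsym, X, hXfin, hXsub, hXsym, hXcard, hcov⟩ := hA
  -- `A^(n+1) ⊆ X^n * A`
  have hpow : ∀ n : ℕ, A ^ (n + 1) ⊆ X ^ n * A := by
    intro n
    induction n with
    | zero => simp
    | succ n ih =>
      calc A ^ (n + 2) = A ^ (n + 1) * A := by rw [pow_succ]
        _ ⊆ (X ^ n * A) * A := Set.mul_subset_mul_right ih
        _ = X ^ n * (A * A) := by rw [mul_assoc]
        _ ⊆ X ^ n * (X * A) := Set.mul_subset_mul_left hcov
        _ = X ^ (n + 1) * A := by rw [pow_succ, mul_assoc]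
  -- `X^n` is finite
  have hXnfin : ∀ n : ℕ, (X ^ n : Set G).Finite := by
    intro n
    induction n with
    | zero => simp
    | succ n ih => rw [pow_succ]; exact ih.mul hXfin
  -- `|X^n| ≤ |X|^n`
  have hXncard : ∀ n : ℕ, ((X ^ n : Set G)).ncard ≤ X.ncard ^ n := by
    intro n
    induction n with
    | zero =>
      rw [pow_zero, pow_zero]
      show (1 : Set G).ncard ≤ 1
      rw [show (1 : Set G) = {1} from rfl, Set.ncard_singleton]
    | succ n ih =>
      rw [pow_succ, pow_succ]
      exact le_trans Set.natCard_mul_le (Nat.mul_le_mul_right _ ih)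
  intro k hk
  obtain ⟨n, rfl⟩ : ∃ n, k = n + 1 := ⟨k - 1, (Nat.succ_pred_eq_of_pos hk).symm⟩
  simp only [Nat.add_sub_cancel]
  -- cover `A^(n+1) ∩ H` by the slices `(y • A) ∩ H`, `y ∈ X^n`
  have hcover : A ^ (n + 1) ∩ (H : Set G) ⊆ ⋃ y ∈ (X ^ n : Set G), (y • A) ∩ (H : Set G) := by
    rintro z ⟨hz, hzH⟩
    obtain ⟨x, hx, a, ha, rfl⟩ := hpow n hz
    exact Set.mem_biUnion hx ⟨⟨a, ha, rfl⟩, hzH⟩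
  have hslicefin : ∀ y ∈ (X ^ n : Set G), ((y • A) ∩ (H : Set G)).Finite :=
    fun y _ => (hAfin.smul_set).inter_of_left _
  have hmain : (A ^ (n + 1) ∩ (H : Set G)).ncard ≤
      (X ^ n : Set G).ncard * (A * A ∩ (H : Set G)).ncard := by
    calc (A ^ (n + 1) ∩ (H : Set G)).ncard
        ≤ (⋃ y ∈ (X ^ n : Set G), (y • A) ∩ (H : Set G)).ncard :=
          Set.ncard_le_ncard hcover ((hXnfin n).biUnion hslicefin)
      _ ≤ (X ^ n : Set G).ncard * (A * A ∩ (H : Set G)).ncard :=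
          biUnion_ncard_le' (hXnfin n) _ _
            (fun y _ => slice_ncard_le hAfin hsym H y) hslicefin
  have hXK : ((X ^ n : Set G).ncard : ℝ) ≤ K ^ n := by
    have h1 : ((X ^ n : Set G).ncard : ℝ) ≤ (X.ncard : ℝ) ^ n := by
      exact_mod_cast hXncard n
    exact h1.trans (pow_le_pow_left₀ (Nat.cast_nonneg _) hXcard n)
  calc ((A ^ (n + 1) ∩ (H : Set G)).ncard : ℝ)
      ≤ ((X ^ n : Set G).ncard : ℝ) * (A * A ∩ (H : Set G)).ncard := by exact_mod_cast hmain
    _ ≤ K ^ n * (A * A ∩ (H : Set G)).ncard := by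
        exact mul_le_mul_of_nonneg_right hXK (Nat.cast_nonneg _)
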